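/- If λ and μ are partitions of n and there exists a semistandard λ-tableau of content μ (i.e., the Kostka number K_{λμ} > 0), then λ dominates μ: for every r, λ_1 + ... + λ_r ≥ μ_1 + ... + μ_r. -/
import Mathlib


/-- A composition of `n`: a finitely-supported sequence of naturals summing to `n`. -/
def IsComposition (n : ℕ) (μ : ℕ → ℕ) : Prop :=
  (Function.support μ).Finite ∧ ∑ᶠ i, μ i = n

/-- A partition of `n`: a weakly decreasing composition of `n`. -/
def IsPartition (n : ℕ) (μ : ℕ → ℕ) : Prop :=
  Antitone μ ∧ IsComposition n μ

/-- `μ` dominates `ν`: every partial sum of `μ` is at least that of `ν`. -/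
def Dominates (μ ν : ℕ → ℕ) : Prop :=
  ∀ r, ∑ i ∈ Finset.range r, ν i ≤ ∑ i ∈ Finset.range r, μ i

/-- `T` is a semistandard tableau of shape `p` (0-indexed rows/columns/entries):
rows weakly increase, columns strictly increase, and `T` is zero outside the diagram. -/
def IsSSYT (p : ℕ → ℕ) (T : ℕ → ℕ → ℕ) : Prop :=
  (∀ r c₁ c₂, c₁ ≤ c₂ → c₂ < p r → T r c₁ ≤ T r c₂) ∧
  (∀ r₁ r₂ c, r₁ < r₂ → c < p r₂ → T r₁ c < T r₂ c) ∧
  (∀ r c, p r ≤ c → T r c = 0)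

/-- The number of entries of `T` equal to `i` within the diagram of `p`. -/
noncomputable def contentOf (p : ℕ → ℕ) (T : ℕ → ℕ → ℕ) (i : ℕ) : ℕ :=
  {q : ℕ × ℕ | q.2 < p q.1 ∧ T q.1 q.2 = i}.ncard

/-- The Kostka number: the number of semistandard tableaux of shape `p` and content `μ`. -/
noncomputable def Kostka (p μ : ℕ → ℕ) : ℕ :=
  {T : ℕ → ℕ → ℕ | IsSSYT p T ∧ ∀ i, contentOf p T i = μ i}.ncard


private lemma ssyt_row_le {p : ℕ → ℕ} {T : ℕ → ℕ → ℕ} (hp : Antitone p) (hT : IsSSYT p T) :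
    ∀ r c, c < p r → r ≤ T r c := by
  intro r
  induction r with
  | zero => intro c _; exact Nat.zero_le _
  | succ k ih =>
    intro c hc
    have hc' : c < p k := lt_of_lt_of_le hc (hp (Nat.le_succ k))
    have h2 := hT.2.1 k (k+1) c (Nat.lt_succ_self k) hc
    exact Nat.succ_le_of_lt (lt_of_le_of_lt (ih c hc') h2)

private def cellsF (p : ℕ → ℕ) (r : ℕ) : Finset (ℕ × ℕ) :=
  (Finset.range r).biUnion fun i => {i} ×ˢ Finset.range (p i)

private lemma mem_cellsF {p : ℕ → ℕ} {r : ℕ} {q : ℕ × ℕ} :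
    q ∈ cellsF p r ↔ q.1 < r ∧ q.2 < p q.1 := by
  simp only [cellsF, Finset.mem_biUnion, Finset.mem_range, Finset.mem_product,
    Finset.mem_singleton]
  constructor
  · rintro ⟨i, hi, rfl, h2⟩; exact ⟨hi, h2⟩
  · rintro ⟨h1, h2⟩; exact ⟨q.1, h1, rfl, h2⟩

private lemma card_cellsF (p : ℕ → ℕ) (r : ℕ) :
    (cellsF p r).card = ∑ i ∈ Finset.range r, p i := by
  rw [cellsF, Finset.card_biUnion]
  · simp
  · intro i _ j _ hij
    simp only [Finset.disjoint_left, Finset.mem_product, Finset.mem_singleton]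
    rintro q ⟨rfl, -⟩ ⟨h, -⟩
    exact hij h

theorem kostka_note_stmt4 {n : ℕ} (lam μ : ℕ → ℕ)
    (hlam : IsPartition n lam) (hμ : IsPartition n μ)
    (h : 0 < Kostka lam μ) :
    Dominates lam μ := by
  obtain ⟨T, hT, hcont⟩ := Set.nonempty_of_ncard_ne_zero h.ne'
  intro r
  have hrow := ssyt_row_le hlam.1 hT
  have key : ∀ i < r, {q : ℕ × ℕ | q.2 < lam q.1 ∧ T q.1 q.2 = i}
      = ↑((cellsF lam r).filter fun q => T q.1 q.2 = i) := by
    intro i hi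
    ext q
    simp only [Set.mem_setOf_eq, Finset.coe_filter, mem_cellsF]
    constructor
    · rintro ⟨h1, h2⟩
      refine ⟨⟨?_, h1⟩, h2⟩
      calc q.1 ≤ T q.1 q.2 := hrow q.1 q.2 h1
        _ = i := h2
        _ < r := hi
    · rintro ⟨⟨-, h1⟩, h2⟩; exact ⟨h1, h2⟩
  have hμeq : ∀ i < r, μ i = ((cellsF lam r).filter fun q => T q.1 q.2 = i).card := by
    intro i hi
    rw [← hcont i, contentOf, key i hi, Set.ncard_coe_finset]
  calc ∑ i ∈ Finset.range r, μ i
      = ∑ i ∈ Finset.range r, ((cellsF lam r).filter fun q => T q.1 q.2 = i).card := by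
        apply Finset.sum_congr rfl; intro i hi
        exact hμeq i (Finset.mem_range.mp hi)
    _ = ((cellsF lam r).filter fun q => T q.1 q.2 ∈ Finset.range r).card := by
        have hfib := Finset.card_eq_sum_card_fiberwise
          (f := fun q : ℕ × ℕ => T q.1 q.2)
          (s := (cellsF lam r).filter fun q => T q.1 q.2 ∈ Finset.range r)
          (t := Finset.range r)
          (fun q hq => (Finset.mem_filter.mp hq).2)
        rw [hfib]
        apply Finset.sum_congr rfl
        intro i hi
        congr 1
        rw [Finset.filter_filter]
        apply Finset.filter_congr
        intro q _
        simp only [Finset.mem_range] at hi ⊢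
        constructor
        · intro hq; exact ⟨hq ▸ hi, hq⟩
        · exact And.right
    _ ≤ (cellsF lam r).card := Finset.card_filter_le _ _
    _ = ∑ i ∈ Finset.range r, lam i := card_cellsF lam r
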